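/- Suppose for all probability measures ν ≪ μ on a unit cube Q ⊂ ℝⁿ we have W₂²(μ, ν) ≤ (40/9) R² D(ν || μ), where R ≥ 1. Then for any measurable A ⊆ ℝⁿ with μ(A) ≥ 1/2 and any t > 0, μ(A + tBⁿ) ≥ 1 − exp(−t²/(9R²)). -/

import Mathlib

open Set MeasureTheory

theorem concentration_from_transport_cost (n : ℕ) (R : ℝ) (hR : 1 ≤ R)
    (μ : Measure (EuclideanSpace ℝ (Fin n))) [IsProbabilityMeasure μ]
    (a : Fin n → ℝ)
    (hQ : μ {x : EuclideanSpace ℝ (Fin n) | ∀ i, x i ∈ Icc (a i) (a i + 1)} = 1)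
    -- quadratic transportation-cost inequality W₂²(μ,ν) ≤ (40/9) R² D(ν‖μ)
    (htc : ∀ g : EuclideanSpace ℝ (Fin n) → ℝ, (∀ x, 0 ≤ g x) →
      Integrable g μ → Integrable (fun x => g x * Real.log (g x)) μ →
      IsProbabilityMeasure (μ.withDensity (fun x => ENNReal.ofReal (g x))) →
      ∃ γ : Measure (EuclideanSpace ℝ (Fin n) × EuclideanSpace ℝ (Fin n)),
        IsProbabilityMeasure γ ∧
        γ.map Prod.fst = μ ∧
        γ.map Prod.snd = μ.withDensity (fun x => ENNReal.ofReal (g x)) ∧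
        ∫ p, dist p.1 p.2 ^ 2 ∂γ ≤ (40 / 9) * R ^ 2 * ∫ x, g x * Real.log (g x) ∂μ) :
    ∀ A : Set (EuclideanSpace ℝ (Fin n)), MeasurableSet A →
      (1 : ℝ) / 2 ≤ (μ A).toReal → ∀ t : ℝ, 0 < t →
      1 - Real.exp (-t ^ 2 / (9 * R ^ 2)) ≤
        (μ {x | ∃ y ∈ A, dist x y ≤ t}).toReal := by
  intro A hA hAhalf t ht
  -- the cube
  set Q : Set (EuclideanSpace ℝ (Fin n)) :=
    {x : EuclideanSpace ℝ (Fin n) | ∀ i, x i ∈ Icc (a i) (a i + 1)} with hQdef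
  have hQmeas : MeasurableSet Q := by
    have : Q = ⋂ i, (fun x : EuclideanSpace ℝ (Fin n) => x i) ⁻¹' Icc (a i) (a i + 1) := by
      ext x; simp [hQdef]
    rw [this]
    exact MeasurableSet.iInter fun i => ((by fun_prop : Continuous fun x : EuclideanSpace ℝ (Fin n) => x i).measurable) measurableSet_Icc
  have hμQc : μ Qᶜ = 0 := by
    rw [prob_compl_eq_one_sub hQmeas, hQ, tsub_self]
  -- distance bound on the cube
  have hdistQ : ∀ x ∈ Q, ∀ y ∈ Q, dist x y ^ 2 ≤ (n : ℝ) := by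
    intro x hx y hy
    rw [EuclideanSpace.dist_eq x y, Real.sq_sqrt (by positivity)]
    calc ∑ i, dist (x i) (y i) ^ 2 ≤ ∑ _i : Fin n, (1 : ℝ) := by
          refine Finset.sum_le_sum fun i _ => ?_
          have hxi := hx i; have hyi := hy i
          have h1 : dist (x i) (y i) ≤ 1 := by
            rw [Real.dist_eq, abs_le]
            constructor <;> [linarith [hxi.1, hxi.2, hyi.1, hyi.2];
              linarith [hxi.1, hxi.2, hyi.1, hyi.2]]
          nlinarith [dist_nonneg (x := x i) (y := y i)]
      _ = (n : ℝ) := by simp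
  -- A is nonempty
  rcases A.eq_empty_or_nonempty with rfl | hAne
  · simp at hAhalf; norm_num at hAhalf
  -- the open t-enlargement
  set C : Set (EuclideanSpace ℝ (Fin n)) := {x | Metric.infDist x A < t} with hCdef
  have hCmeas : MeasurableSet C :=
    (isOpen_lt (Metric.continuous_infDist_pt A) continuous_const).measurableSet
  have hsub : C ⊆ {x | ∃ y ∈ A, dist x y ≤ t} := by
    intro x hx
    obtain ⟨y, hyA, hxy⟩ := (Metric.infDist_lt_iff hAne).mp hx
    exact ⟨y, hyA, hxy.le⟩
  have hmono : (μ C).toReal ≤ (μ {x | ∃ y ∈ A, dist x y ≤ t}).toReal :=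
    ENNReal.toReal_mono (measure_ne_top μ _) (measure_mono hsub)
  have hC1 : (μ Cᶜ).toReal = 1 - (μ C).toReal := by
    rw [prob_compl_eq_one_sub hCmeas,
      ENNReal.toReal_sub_of_le prob_le_one ENNReal.one_ne_top, ENNReal.toReal_one]
  suffices h : (μ Cᶜ).toReal ≤ Real.exp (-t ^ 2 / (9 * R ^ 2)) by linarith
  set s : ℝ := (μ Cᶜ).toReal with hsdef
  rcases eq_or_lt_of_le (ENNReal.toReal_nonneg : (0:ℝ) ≤ s) with h0 | hs
  · rw [hsdef, ← h0]; exact (Real.exp_pos _).le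
  -- the renormalized restriction density
  have hμCc_ne : μ Cᶜ ≠ ⊤ := measure_ne_top μ _
  have hμCc_eq : μ Cᶜ = ENNReal.ofReal s := (ENNReal.ofReal_toReal hμCc_ne).symm
  set g : EuclideanSpace ℝ (Fin n) → ℝ := Cᶜ.indicator (fun _ => s⁻¹) with hgdef
  have hg_nonneg : ∀ x, 0 ≤ g x := fun x =>
    Set.indicator_nonneg (fun _ _ => by positivity) x
  have hg_int : Integrable g μ := (integrable_const s⁻¹).indicator hCmeas.compl
  have hg_eq_log : (fun x => g x * Real.log (g x)) =
      Cᶜ.indicator (fun _ => s⁻¹ * Real.log s⁻¹) := by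
    funext x
    by_cases hx : x ∈ Cᶜ <;> simp [hgdef, hx]
  have hg_log_int : Integrable (fun x => g x * Real.log (g x)) μ := by
    rw [hg_eq_log]; exact (integrable_const _).indicator hCmeas.compl
  have hfe : (fun x => ENNReal.ofReal (g x)) =
      Cᶜ.indicator (fun _ => ENNReal.ofReal s⁻¹) := by
    funext x
    by_cases hx : x ∈ Cᶜ <;> simp [hgdef, hx]
  have hoRs : (ENNReal.ofReal s⁻¹) * μ Cᶜ = 1 := by
    rw [hμCc_eq, ← ENNReal.ofReal_mul (by positivity), inv_mul_cancel₀ hs.ne',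
      ENNReal.ofReal_one]
  have hwd : IsProbabilityMeasure (μ.withDensity fun x => ENNReal.ofReal (g x)) := by
    constructor
    rw [withDensity_apply _ MeasurableSet.univ, Measure.restrict_univ, hfe,
      lintegral_indicator hCmeas.compl _, setLIntegral_const]
    exact hoRs
  have hint_val : ∫ x, g x * Real.log (g x) ∂μ = Real.log s⁻¹ := by
    rw [hg_eq_log, integral_indicator_const _ hCmeas.compl, smul_eq_mul, measureReal_def, ← hsdef]
    field_simp
    exact mul_div_cancel_left₀ _ (show s ≠ 0 from hs.ne')
  obtain ⟨γ, hγ, h1, h2, hcost⟩ := htc g hg_nonneg hg_int hg_log_int hwd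
  haveI := hγ
  -- the second marginal gives no mass to C, nor to Qᶜ
  have hν_ac : μ.withDensity (fun x => ENNReal.ofReal (g x)) ≪ μ :=
    withDensity_absolutelyContinuous μ _
  have hνC : μ.withDensity (fun x => ENNReal.ofReal (g x)) C = 0 := by
    rw [withDensity_apply _ hCmeas, hfe, lintegral_indicator hCmeas.compl _,
      setLIntegral_const, Measure.restrict_apply hCmeas.compl, compl_inter_self,
      measure_empty, mul_zero]
  have hsnd : ∀ᵐ p ∂γ, p.2 ∈ Cᶜ := by
    have h0 : γ (Prod.snd ⁻¹' C) = 0 := by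
      rw [← Measure.map_apply measurable_snd hCmeas, h2, hνC]
    exact measure_eq_zero_iff_ae_notMem.mp h0
  have hfstA : γ (Prod.fst ⁻¹' A) = μ A := by
    rw [← Measure.map_apply measurable_fst hA, h1]
  -- a.e. both coordinates live in the cube
  have haeQ1 : ∀ᵐ p ∂γ, p.1 ∈ Q := by
    have h0 : γ (Prod.fst ⁻¹' Qᶜ) = 0 := by
      rw [← Measure.map_apply measurable_fst hQmeas.compl, h1, hμQc]
    have := measure_eq_zero_iff_ae_notMem.mp h0
    filter_upwards [this] with p hp
    simpa using hp
  have haeQ2 : ∀ᵐ p ∂γ, p.2 ∈ Q := by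
    have h0 : γ (Prod.snd ⁻¹' Qᶜ) = 0 := by
      rw [← Measure.map_apply measurable_snd hQmeas.compl, h2, hν_ac hμQc]
    have := measure_eq_zero_iff_ae_notMem.mp h0
    filter_upwards [this] with p hp
    simpa using hp
  have hbdd : ∀ᵐ p ∂γ, ‖dist p.1 p.2 ^ 2‖ ≤ (n : ℝ) := by
    filter_upwards [haeQ1, haeQ2] with p hp1 hp2
    rw [Real.norm_eq_abs, abs_of_nonneg (by positivity)]
    exact hdistQ _ hp1 _ hp2
  have hint_dist : Integrable (fun p => dist p.1 p.2 ^ 2) γ :=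
    Integrable.mono' (integrable_const (n : ℝ))
      ((continuous_dist.pow 2).aestronglyMeasurable) hbdd
  -- a.e. lower bound on the cost over {p | p.1 ∈ A}
  have haeA : ∀ᵐ p ∂γ, p ∈ Prod.fst ⁻¹' A → t ^ 2 ≤ dist p.1 p.2 ^ 2 := by
    filter_upwards [hsnd] with p hp2 hp1
    have h1' : Metric.infDist p.2 A ≤ dist p.2 p.1 := Metric.infDist_le_dist_of_mem hp1
    have h2' : t ≤ Metric.infDist p.2 A := not_lt.mp hp2
    have h3' : t ≤ dist p.1 p.2 := by rw [dist_comm]; linarith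
    nlinarith [ht.le]
  have hrestr : ∀ᵐ p ∂γ.restrict (Prod.fst ⁻¹' A),
      (fun _ => t ^ 2) p ≤ (fun p => dist p.1 p.2 ^ 2) p :=
    (ae_restrict_iff' (measurable_fst hA)).mpr haeA
  have h12 : t ^ 2 * (1 / 2) ≤ (40 / 9) * R ^ 2 * Real.log s⁻¹ := by
    calc t ^ 2 * (1 / 2) ≤ t ^ 2 * (μ A).toReal := by nlinarith [sq_nonneg t]
      _ = ∫ _p in Prod.fst ⁻¹' A, (t ^ 2 : ℝ) ∂γ := by
          rw [setIntegral_const, measureReal_def, hfstA, smul_eq_mul, mul_comm]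
      _ ≤ ∫ p in Prod.fst ⁻¹' A, dist p.1 p.2 ^ 2 ∂γ :=
          integral_mono_ae (integrable_const _) hint_dist.restrict hrestr
      _ ≤ ∫ p, dist p.1 p.2 ^ 2 ∂γ :=
          setIntegral_le_integral hint_dist (Filter.Eventually.of_forall fun p => by positivity)
      _ ≤ (40 / 9) * R ^ 2 * Real.log s⁻¹ := by rw [← hint_val]; exact hcost
  rw [Real.log_inv] at h12
  have hR2 : (0:ℝ) < R ^ 2 := by nlinarith
  have hlog : Real.log s ≤ -t ^ 2 / (9 * R ^ 2) := by
    rw [le_div_iff₀ (by positivity : (0:ℝ) < 9 * R ^ 2)]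
    nlinarith [h12, sq_nonneg t]
  calc s = Real.exp (Real.log s) := (Real.exp_log hs).symm
    _ ≤ Real.exp (-t ^ 2 / (9 * R ^ 2)) := Real.exp_le_exp.mpr hlog
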